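/- For all integers m and n, the group with presentation on four generators c₁, d₁, c₂, d₂ with relators c₁c₂, d₁d₂, all six pairwise commutators [c₁,d₁], [c₁,c₂], [c₁,d₂], [d₁,c₂], [d₁,d₂], [c₂,d₂], together with the two additional relators c₁^m and d₂^n, is isomorphic to ℤ/mℤ × ℤ/nℤ; in particular it is trivial when m = ±1 and n = ±1, cyclic of order |n| when m = ±1 and |n| ≥ 2, and isomorphic to ℤ × ℤ/|n|ℤ when m = 0 and |n| ≥ 2. -/

import Mathlib

/-!
For all integers m and n, the group presented on c₁, d₁, c₂, d₂ with relators
c₁c₂, d₁d₂, all six pairwise commutators, c₁^m and d₂^n is isomorphic to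
ℤ/mℤ × ℤ/nℤ, interpreted as ZMod m.natAbs × ZMod n.natAbs
(so ℤ factors when the exponent is 0, trivial factors when it is ±1).
Generators: c₁ = 0, d₁ = 1, c₂ = 2, d₂ = 3.
-/

namespace Stmt8

def c₁ : FreeGroup (Fin 4) := FreeGroup.of 0
def d₁ : FreeGroup (Fin 4) := FreeGroup.of 1
def c₂ : FreeGroup (Fin 4) := FreeGroup.of 2
def d₂ : FreeGroup (Fin 4) := FreeGroup.of 3

def rels (m n : ℤ) : Set (FreeGroup (Fin 4)) :=
  { c₁ * c₂,
    d₁ * d₂,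
    c₁ * d₁ * c₁⁻¹ * d₁⁻¹,
    c₁ * c₂ * c₁⁻¹ * c₂⁻¹,
    c₁ * d₂ * c₁⁻¹ * d₂⁻¹,
    d₁ * c₂ * d₁⁻¹ * c₂⁻¹,
    d₁ * d₂ * d₁⁻¹ * d₂⁻¹,
    c₂ * d₂ * c₂⁻¹ * d₂⁻¹,
    c₁ ^ m,
    d₂ ^ n }

-- helper: integer cast of m into ZMod m.natAbs is zero
lemma intCast_natAbs_self (m : ℤ) : ((m : ℤ) : ZMod m.natAbs) = 0 :=
  (ZMod.intCast_zmod_eq_zero_iff_dvd m m.natAbs).2 (Int.natAbs_dvd.mpr dvd_rfl)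

variable (m n : ℤ)

abbrev GG := PresentedGroup (rels m n)

lemma mk_rel {r : FreeGroup (Fin 4)} (h : r ∈ rels m n) :
    PresentedGroup.mk (rels m n) r = 1 :=
  (QuotientGroup.eq_one_iff _).2 (Subgroup.subset_normalClosure h)

def aa : GG m n := PresentedGroup.of 0
def bb : GG m n := PresentedGroup.of 1
def cc : GG m n := PresentedGroup.of 2
def dd : GG m n := PresentedGroup.of 3

lemma rel_ac : aa m n * cc m n = 1 := by
  have := mk_rel m n (r := c₁ * c₂) (by simp [rels])
  simpa [c₁, c₂, aa, cc, PresentedGroup.of] using this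

lemma rel_bd : bb m n * dd m n = 1 := by
  have := mk_rel m n (r := d₁ * d₂) (by simp [rels])
  simpa [d₁, d₂, bb, dd, PresentedGroup.of] using this

lemma rel_comm_ad : Commute (aa m n) (dd m n) := by
  have := mk_rel m n (r := c₁ * d₂ * c₁⁻¹ * d₂⁻¹) (by simp [rels])
  have h : aa m n * dd m n * (aa m n)⁻¹ * (dd m n)⁻¹ = 1 := by
    simpa [c₁, d₂, aa, dd, PresentedGroup.of] using this
  have h2 : aa m n * dd m n = dd m n * aa m n := by
    have := mul_inv_eq_one.mp h
    rw [mul_inv_eq_iff_eq_mul] at this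
    simpa [mul_assoc] using this
  exact h2

lemma rel_am : aa m n ^ m = 1 := by
  have := mk_rel m n (r := c₁ ^ m) (by simp [rels])
  simpa [c₁, aa, PresentedGroup.of] using this

lemma rel_dn : dd m n ^ n = 1 := by
  have := mk_rel m n (r := d₂ ^ n) (by simp [rels])
  simpa [d₂, dd, PresentedGroup.of] using this


-- target type
abbrev TT := Multiplicative (ZMod m.natAbs × ZMod n.natAbs)

def fgen : Fin 4 → TT m n :=
  ![Multiplicative.ofAdd (1, 0), Multiplicative.ofAdd (0, -1),
    Multiplicative.ofAdd (-1, 0), Multiplicative.ofAdd (0, 1)]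

lemma fgen_rels : ∀ r ∈ rels m n, FreeGroup.lift (fgen m n) r = 1 := by
  intro r hr
  simp only [rels, Set.mem_insert_iff, Set.mem_singleton_iff] at hr
  rcases hr with rfl|rfl|rfl|rfl|rfl|rfl|rfl|rfl|rfl|rfl <;>
    simp [c₁, d₁, c₂, d₂, fgen, ← ofAdd_add, ← ofAdd_neg, ← ofAdd_zsmul,
      Prod.ext_iff, intCast_natAbs_self]


def FF : GG m n →* TT m n := PresentedGroup.toGroup (fgen_rels m n)

lemma aa_natAbs : aa m n ^ (m.natAbs : ℤ) = 1 := by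
  rcases Int.natAbs_eq m with h | h
  · rw [← h]; exact rel_am m n
  · rw [show ((m.natAbs : ℤ)) = -m by omega, zpow_neg, rel_am, inv_one]

lemma dd_natAbs : dd m n ^ (n.natAbs : ℤ) = 1 := by
  rcases Int.natAbs_eq n with h | h
  · rw [← h]; exact rel_dn m n
  · rw [show ((n.natAbs : ℤ)) = -n by omega, zpow_neg, rel_dn, inv_one]

def phi : Multiplicative (ZMod m.natAbs) →* GG m n :=
  AddMonoidHom.toMultiplicativeLeft
    (ZMod.lift m.natAbs ⟨zmultiplesHom (Additive (GG m n)) (Additive.ofMul (aa m n)), by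
      rw [zmultiplesHom_apply, ← ofMul_zpow, aa_natAbs]; rfl⟩)

def psi : Multiplicative (ZMod n.natAbs) →* GG m n :=
  AddMonoidHom.toMultiplicativeLeft
    (ZMod.lift n.natAbs ⟨zmultiplesHom (Additive (GG m n)) (Additive.ofMul (dd m n)), by
      rw [zmultiplesHom_apply, ← ofMul_zpow, dd_natAbs]; rfl⟩)

lemma phi_spec (j : ℤ) :
    phi m n (Multiplicative.ofAdd ((j : ZMod m.natAbs))) = aa m n ^ j := by
  simp [phi, ZMod.lift_coe, ← ofMul_zpow]

lemma psi_spec (j : ℤ) :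
    psi m n (Multiplicative.ofAdd ((j : ZMod n.natAbs))) = dd m n ^ j := by
  simp [psi, ZMod.lift_coe, ← ofMul_zpow]

lemma phi_psi_comm : ∀ x y, Commute (phi m n x) (psi m n y) := by
  intro x y
  obtain ⟨j, hj⟩ := ZMod.intCast_surjective (n := m.natAbs) (Multiplicative.toAdd x)
  obtain ⟨k, hk⟩ := ZMod.intCast_surjective (n := n.natAbs) (Multiplicative.toAdd y)
  have hx : x = Multiplicative.ofAdd ((j : ZMod m.natAbs)) := ((congrArg Multiplicative.ofAdd hj).trans (ofAdd_toAdd x)).symm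
  have hy : y = Multiplicative.ofAdd ((k : ZMod n.natAbs)) := ((congrArg Multiplicative.ofAdd hk).trans (ofAdd_toAdd y)).symm
  rw [hx, hy, phi_spec, psi_spec]
  exact (rel_comm_ad m n).zpow_zpow j k

def GGinv : TT m n →* GG m n :=
  (MonoidHom.noncommCoprod (phi m n) (psi m n) (phi_psi_comm m n)).comp
    (MulEquiv.prodMultiplicative _ _).toMonoidHom


lemma GGinv_ofAdd (p : ZMod m.natAbs) (q : ZMod n.natAbs) :
    GGinv m n (Multiplicative.ofAdd (p, q)) =
      phi m n (Multiplicative.ofAdd p) * psi m n (Multiplicative.ofAdd q) := rfl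

lemma comp_left : (GGinv m n).comp (FF m n) = MonoidHom.id (GG m n) := by
  apply PresentedGroup.ext
  intro x
  fin_cases x
  · show GGinv m n (FF m n (aa m n)) = aa m n
    rw [show FF m n (aa m n) = fgen m n 0 from PresentedGroup.toGroup.of _]
    show GGinv m n (Multiplicative.ofAdd (1, 0)) = aa m n
    rw [GGinv_ofAdd, show ((1 : ZMod m.natAbs)) = (((1:ℤ) : ZMod m.natAbs)) by norm_cast,
      show ((0 : ZMod n.natAbs)) = (((0:ℤ) : ZMod n.natAbs)) by norm_cast,
      phi_spec, psi_spec]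
    simp
  · show GGinv m n (FF m n (bb m n)) = bb m n
    rw [show FF m n (bb m n) = fgen m n 1 from PresentedGroup.toGroup.of _]
    show GGinv m n (Multiplicative.ofAdd (0, -1)) = bb m n
    rw [GGinv_ofAdd, show ((0 : ZMod m.natAbs)) = (((0:ℤ) : ZMod m.natAbs)) by norm_cast,
      show ((-1 : ZMod n.natAbs)) = (((-1:ℤ) : ZMod n.natAbs)) by norm_cast,
      phi_spec, psi_spec]
    simp
    exact (eq_inv_of_mul_eq_one_left (rel_bd m n)).symm
  · show GGinv m n (FF m n (cc m n)) = cc m n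
    rw [show FF m n (cc m n) = fgen m n 2 from PresentedGroup.toGroup.of _]
    show GGinv m n (Multiplicative.ofAdd (-1, 0)) = cc m n
    rw [GGinv_ofAdd, show ((-1 : ZMod m.natAbs)) = (((-1:ℤ) : ZMod m.natAbs)) by norm_cast,
      show ((0 : ZMod n.natAbs)) = (((0:ℤ) : ZMod n.natAbs)) by norm_cast,
      phi_spec, psi_spec]
    simp
    exact (eq_inv_of_mul_eq_one_right (rel_ac m n)).symm
  · show GGinv m n (FF m n (dd m n)) = dd m n
    rw [show FF m n (dd m n) = fgen m n 3 from PresentedGroup.toGroup.of _]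
    show GGinv m n (Multiplicative.ofAdd (0, 1)) = dd m n
    rw [GGinv_ofAdd, show ((0 : ZMod m.natAbs)) = (((0:ℤ) : ZMod m.natAbs)) by norm_cast,
      show ((1 : ZMod n.natAbs)) = (((1:ℤ) : ZMod n.natAbs)) by norm_cast,
      phi_spec, psi_spec]
    simp

lemma FF_aa : FF m n (aa m n) = Multiplicative.ofAdd (1, 0) :=
  PresentedGroup.toGroup.of _

lemma FF_dd : FF m n (dd m n) = Multiplicative.ofAdd (0, 1) :=
  PresentedGroup.toGroup.of _

lemma comp_right : (FF m n).comp (GGinv m n) = MonoidHom.id (TT m n) := by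
  refine MonoidHom.ext fun x => ?_
  obtain ⟨j, hj⟩ := ZMod.intCast_surjective (n := m.natAbs) (Multiplicative.toAdd x).1
  obtain ⟨k, hk⟩ := ZMod.intCast_surjective (n := n.natAbs) (Multiplicative.toAdd x).2
  have hx : x = Multiplicative.ofAdd (((j : ZMod m.natAbs)), ((k : ZMod n.natAbs))) := by
    rw [hj, hk]
    exact (ofAdd_toAdd x).symm
  rw [MonoidHom.comp_apply, MonoidHom.id_apply, hx, GGinv_ofAdd, phi_spec, psi_spec,
    map_mul, map_zpow, map_zpow, FF_aa, FF_dd, ← ofAdd_zsmul, ← ofAdd_zsmul, ← ofAdd_add]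
  congr 1
  simp [Prod.ext_iff]


theorem pi1_after_luttinger (m n : ℤ) :
    Nonempty (PresentedGroup (rels m n) ≃*
      Multiplicative (ZMod m.natAbs × ZMod n.natAbs)) := by
  exact ⟨MonoidHom.toMulEquiv (FF m n) (GGinv m n) (comp_left m n) (comp_right m n)⟩

end Stmt8
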